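/- arXiv:1507.07623 — 3 statements merged into one kernel-verified Lean document; each statement's English description precedes it below -/
import Mathlib

section
/- Let B be a bipartite graph with parts V₁ = {1,…,n} and V₂ = {v₁,…,v_m}, all of whose edges join V₁ to V₂, and for each k let N_k ⊆ V₁ be the neighborhood of v_k. Then vol(B) = Σ_{σ ∈ S_n} Π_{i=1}^{n} 1/(i + Σ_{j=1}^{i} α_{j,σ}), where for a permutation σ of {1,…,n}, α_{i,σ} is the number of vertices v_k ∈ V₂ such that σ(i) ∈ N_k but σ(j) ∉ N_k for all j < i. -/
open MeasureTheory
open scoped ENNReal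

/-- The graph polytope volume: `vol(G)` is the Lebesgue volume of
`{x ∈ [0,1]^V : x_i + x_j ≤ 1 for every edge ij of G}`. -/
noncomputable def gvol {V : Type*} [Fintype V] (G : SimpleGraph V) : ℝ :=
  (volume {x : V → ℝ | (∀ i, x i ∈ Set.Icc (0:ℝ) 1) ∧
      ∀ ⦃i j⦄, G.Adj i j → x i + x j ≤ 1}).toReal

/-- The bipartite graph with parts `V₁ = Fin n` and `V₂ = Fin m`, where the
neighborhood of the vertex `v_k ∈ V₂` is `N k ⊆ V₁`. -/
def bipartiteOf {n m : ℕ} (N : Fin m → Finset (Fin n)) :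
    SimpleGraph (Fin n ⊕ Fin m) where
  Adj x y :=
    match x, y with
    | Sum.inl i, Sum.inr k => i ∈ N k
    | Sum.inr k, Sum.inl i => i ∈ N k
    | _, _ => False
  symm := ⟨by rintro (i | k) (i' | k') h <;> exact h⟩
  loopless := ⟨by rintro (i | k) h <;> exact h⟩

/-- `α_{i,σ}`: the number of vertices `v_k ∈ V₂` such that `σ(i) ∈ N k` but
`σ(j) ∉ N k` for all `j < i`. -/
def alphaCount {n m : ℕ} (N : Fin m → Finset (Fin n)) (σ : Equiv.Perm (Fin n))
    (i : Fin n) : ℕ :=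
  (Finset.univ.filter fun k : Fin m => σ i ∈ N k ∧ ∀ j, j < i → σ j ∉ N k).card


namespace VolB

def cube (n : ℕ) : Set (Fin n → ℝ) := {x | ∀ i, x i ∈ Set.Icc (0:ℝ) 1}

def ordReg (n : ℕ) : Set (Fin n → ℝ) :=
  {u | (∀ i, u i ∈ Set.Icc (0:ℝ) 1) ∧ StrictMono u}

lemma measurableSet_cube (n : ℕ) : MeasurableSet (cube n) := by
  have : cube n = ⋂ i, {x : Fin n → ℝ | x i ∈ Set.Icc 0 1} := by
    ext x; simp [cube]
  rw [this]
  exact MeasurableSet.iInter fun i => (measurable_pi_apply i) measurableSet_Icc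

lemma measurableSet_ordReg (n : ℕ) : MeasurableSet (ordReg n) := by
  have : ordReg n = (⋂ i, {u : Fin n → ℝ | u i ∈ Set.Icc 0 1}) ∩
      ⋂ (i) (j) (_ : i < j), {u : Fin n → ℝ | u i < u j} := by
    ext u
    simp only [ordReg, Set.mem_setOf_eq, Set.mem_inter_iff, Set.mem_iInter]
    exact and_congr Iff.rfl ⟨fun h i j hij => h hij, fun h a b hab => h a b hab⟩
  rw [this]
  exact (MeasurableSet.iInter fun i => (measurable_pi_apply i) measurableSet_Icc).inter
    (.iInter fun i => .iInter fun j => .iInter fun _ =>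
      measurableSet_lt (measurable_pi_apply i) (measurable_pi_apply j))

lemma lint_pow_Ico (a : ℕ) {b : ℝ} (hb : 0 ≤ b) :
    ∫⁻ t in Set.Ico (0:ℝ) b, ENNReal.ofReal (t ^ a) =
      ((a : ℝ≥0∞) + 1)⁻¹ * ENNReal.ofReal (b ^ (a + 1)) := by
  have hint : IntegrableOn (fun t : ℝ => t ^ a) (Set.Ico 0 b) :=
    (continuous_pow a).integrableOn_Icc.mono_set Set.Ico_subset_Icc_self
  have hnn : 0 ≤ᵐ[volume.restrict (Set.Ico (0:ℝ) b)] fun t : ℝ => t ^ a := by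
    filter_upwards [ae_restrict_mem measurableSet_Ico] with t ht
    exact pow_nonneg ht.1 a
  rw [← ofReal_integral_eq_lintegral_ofReal hint hnn]
  have h2 : ∫ t in Set.Ico (0:ℝ) b, t ^ a = b ^ (a+1) / (a+1) := by
    rw [integral_Ico_eq_integral_Ioo, ← integral_Ioc_eq_integral_Ioo,
      ← intervalIntegral.integral_of_le hb, integral_pow]
    simp
  rw [h2, ENNReal.ofReal_div_of_pos (by positivity), ENNReal.div_eq_inv_mul]
  congr 1
  rw [show ((a:ℝ)+1) = ((a+1:ℕ):ℝ) by push_cast; ring, ENNReal.ofReal_natCast]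
  push_cast; ring

lemma lint_pow_Icc01 (a : ℕ) :
    ∫⁻ t in Set.Icc (0:ℝ) 1, ENNReal.ofReal (t ^ a) = ((a : ℝ≥0∞) + 1)⁻¹ := by
  rw [← Measure.restrict_congr_set Ico_ae_eq_Icc, lint_pow_Ico a zero_le_one]
  simp

def Tset {n : ℕ} (w : Fin n → ℝ) : Set ℝ := {t | (0 ≤ t ∧ t ≤ 1) ∧ ∀ j, t < w j}

lemma measurableSet_Tset {n : ℕ} (w : Fin n → ℝ) : MeasurableSet (Tset w) := by
  have : Tset w = Set.Icc 0 1 ∩ ⋂ j, Set.Iio (w j) := by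
    ext t; simp [Tset, Set.mem_Icc, and_assoc]
  rw [this]
  exact measurableSet_Icc.inter (.iInter fun j => measurableSet_Iio)

lemma inner_int {n : ℕ} (a0 : ℕ) {w : Fin n → ℝ} (hw : w ∈ ordReg n) :
    ∫⁻ t in Tset w, ENNReal.ofReal (t ^ a0) =
      ((a0 : ℝ≥0∞) + 1)⁻¹ *
        ∏ j, ENNReal.ofReal (w j ^ (if (j:ℕ) = 0 then a0 + 1 else 0)) := by
  obtain _ | n := n
  · have h1 : Tset w = Set.Icc (0:ℝ) 1 := by
      ext t; simp [Tset, Set.mem_Icc]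
    rw [h1, lint_pow_Icc01]
    simp
  · have h1 : Tset w = Set.Ico 0 (w 0) := by
      ext t
      constructor
      · rintro ⟨⟨h0, _⟩, hj⟩; exact ⟨h0, hj 0⟩
      · rintro ⟨h0, hlt⟩
        exact ⟨⟨h0, hlt.le.trans (hw.1 0).2⟩,
          fun j => lt_of_lt_of_le hlt (hw.2.monotone (Fin.zero_le j))⟩
    have h2 : ∏ j, ENNReal.ofReal (w j ^ (if (j:ℕ) = 0 then a0 + 1 else 0)) =
        ENNReal.ofReal (w 0 ^ (a0 + 1)) := by
      rw [Finset.prod_eq_single (0 : Fin (n+1))]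
      · simp
      · intro j _ hj
        have : (j:ℕ) ≠ 0 := fun h => hj (Fin.ext (by rw [h, Fin.val_zero]))
        simp [this]
      · simp
    rw [h1, lint_pow_Ico a0 (hw.1 0).1, h2]



noncomputable def Iint (n : ℕ) (a : Fin n → ℕ) : ℝ≥0∞ :=
  ∫⁻ u in ordReg n, ∏ i, ENNReal.ofReal (u i ^ a i)

lemma Iint_zero (a : Fin 0 → ℕ) : Iint 0 a = 1 := by
  unfold Iint
  have h1 : ordReg 0 = Set.univ := by
    ext u
    refine ⟨fun _ => trivial, fun _ => ⟨fun i => i.elim0, fun i => i.elim0⟩⟩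
  rw [h1, Measure.restrict_univ]
  simp only [Finset.univ_eq_empty, Finset.prod_empty]
  rw [lintegral_one, show (volume : Measure (Fin 0 → ℝ)) = Measure.pi (fun _ => volume) from rfl,
    Measure.pi_univ]
  simp


lemma insertNth_mem_ordReg {n : ℕ} (t : ℝ) (w : Fin n → ℝ) :
    Fin.insertNth (α := fun _ => ℝ) (0 : Fin (n+1)) t w ∈ ordReg (n+1) ↔ (w ∈ ordReg n ∧ t ∈ Tset w) := by
  have hv0 : Fin.insertNth (α := fun _ => ℝ) (0 : Fin (n+1)) t w 0 = t := by simp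
  have hvs : ∀ j : Fin n, Fin.insertNth (α := fun _ => ℝ) (0 : Fin (n+1)) t w j.succ = w j := by
    intro j
    rw [← Fin.zero_succAbove j, Fin.insertNth_apply_succAbove]
  constructor
  · rintro ⟨hmem, hmono⟩
    refine ⟨⟨fun j => by rw [← hvs j]; exact hmem j.succ,
      fun j k hjk => by
        have := hmono (show (j.succ : Fin (n+1)) < k.succ from Fin.succ_lt_succ_iff.mpr hjk)
        rwa [hvs, hvs] at this⟩, ⟨?_, ?_⟩⟩
    · have := hmem 0; rw [hv0] at this; exact ⟨this.1, this.2⟩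
    · intro j
      have := hmono (show (0 : Fin (n+1)) < j.succ from j.succ_pos)
      rwa [hv0, hvs] at this
  · rintro ⟨⟨hw01, hwmono⟩, ⟨ht01, htw⟩⟩
    constructor
    · intro v
      induction v using Fin.cases with
      | zero => rw [hv0]; exact ht01
      | succ j => rw [hvs]; exact hw01 j
    · intro i k hik
      induction k using Fin.cases with
      | zero => exact absurd hik (Fin.not_lt_zero i).elim
      | succ l =>
        induction i using Fin.cases with
        | zero => rw [hv0, hvs]; exact htw l
        | succ j =>
          rw [hvs, hvs]
          exact hwmono (Fin.succ_lt_succ_iff.mp hik)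

lemma Iint_succ (n : ℕ) (a : Fin (n+1) → ℕ) :
    Iint (n+1) a = ((a 0 : ℝ≥0∞) + 1)⁻¹ *
      Iint n (fun j => a j.succ + if (j:ℕ) = 0 then a 0 + 1 else 0) := by
  classical
  set e := MeasurableEquiv.piFinSuccAbove (fun _ : Fin (n+1) => ℝ) 0 with he
  have hmp : MeasurePreserving e.symm ((volume : Measure ℝ).prod (volume : Measure (Fin n → ℝ)))
      (volume : Measure (Fin (n+1) → ℝ)) :=
    (volume_preserving_piFinSuccAbove (fun _ : Fin (n+1) => ℝ) 0).symm
  have hesymm : ∀ p : ℝ × (Fin n → ℝ), e.symm p = Fin.insertNth (α := fun _ => ℝ) (0 : Fin (n+1)) p.1 p.2 := by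
    intro p
    rw [he, MeasurableEquiv.piFinSuccAbove_symm_apply]
    rfl
  have key := hmp.setLIntegral_comp_preimage_emb e.symm.measurableEmbedding
      (fun x => ∏ i, ENNReal.ofReal (x i ^ a i)) (ordReg (n+1))
  rw [show Iint (n+1) a = ∫⁻ x in ordReg (n+1), ∏ i, ENNReal.ofReal (x i ^ a i) from rfl, ← key]
  set S := e.symm ⁻¹' ordReg (n+1) with hS
  have hSm : MeasurableSet S := e.symm.measurable (measurableSet_ordReg (n+1))
  have hSchar : ∀ p : ℝ × (Fin n → ℝ), p ∈ S ↔ (p.2 ∈ ordReg n ∧ p.1 ∈ Tset p.2) := by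
    intro p
    rw [hS, Set.mem_preimage, hesymm p, insertNth_mem_ordReg]
  set f : ℝ × (Fin n → ℝ) → ℝ≥0∞ := fun p => ∏ i, ENNReal.ofReal (e.symm p i ^ a i) with hf
  have hfm : Measurable f := by
    apply Finset.measurable_prod
    intro i _
    exact ENNReal.measurable_ofReal.comp
      (((measurable_pi_apply i).comp e.symm.measurable).pow_const (a i))
  have hfval : ∀ (t : ℝ) (w : Fin n → ℝ),
      f (t, w) = ENNReal.ofReal (t ^ a 0) * ∏ j, ENNReal.ofReal (w j ^ a j.succ) := by
    intro t w
    have hv0 : Fin.insertNth (α := fun _ => ℝ) (0 : Fin (n+1)) t w 0 = t := by simp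
    have hvs : ∀ j : Fin n, Fin.insertNth (α := fun _ => ℝ) (0 : Fin (n+1)) t w j.succ = w j := by
      intro j
      rw [← Fin.zero_succAbove j, Fin.insertNth_apply_succAbove]
    simp only [hf, hesymm, Fin.prod_univ_succ, hv0, hvs]
  calc ∫⁻ p in S, f p ∂((volume : Measure ℝ).prod volume)
      = ∫⁻ p, S.indicator f p ∂((volume : Measure ℝ).prod volume) := by
        rw [lintegral_indicator hSm]
    _ = ∫⁻ w, ∫⁻ t, S.indicator f (t, w) := by
        rw [lintegral_prod_symm _ ((hfm.indicator hSm).aemeasurable)]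
    _ = ∫⁻ w, (ordReg n).indicator
          (fun w' => ∫⁻ t in Tset w', f (t, w')) w := by
        refine lintegral_congr fun w => ?_
        by_cases hw : w ∈ ordReg n
        · rw [Set.indicator_of_mem hw, ← lintegral_indicator (measurableSet_Tset w)]
          refine lintegral_congr fun t => ?_
          by_cases ht : t ∈ Tset w
          · rw [Set.indicator_of_mem ht, Set.indicator_of_mem ((hSchar (t, w)).mpr ⟨hw, ht⟩)]
          · rw [Set.indicator_of_notMem ht, Set.indicator_of_notMem
              (fun hmem => ht ((hSchar (t, w)).mp hmem).2)]
        · rw [Set.indicator_of_notMem hw]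
          have : ∀ t : ℝ, S.indicator f (t, w) = 0 := fun t =>
            Set.indicator_of_notMem (fun hmem => hw ((hSchar (t, w)).mp hmem).1) f
          simp only [this, lintegral_zero]
    _ = ∫⁻ w in ordReg n, ∫⁻ t in Tset w, f (t, w) := by
        rw [← lintegral_indicator (measurableSet_ordReg n)]
    _ = ∫⁻ w in ordReg n, ((a 0 : ℝ≥0∞) + 1)⁻¹ *
          ∏ j, ENNReal.ofReal (w j ^ (a j.succ + if (j:ℕ) = 0 then a 0 + 1 else 0)) := by
        refine setLIntegral_congr_fun (measurableSet_ordReg n) (fun w hw => ?_)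
        have h1 : ∫⁻ t in Tset w, f (t, w)
            = (∫⁻ t in Tset w, ENNReal.ofReal (t ^ a 0)) *
                ∏ j, ENNReal.ofReal (w j ^ a j.succ) := by
          simp only [hfval]
          rw [lintegral_mul_const'' _ (by fun_prop : Measurable fun t : ℝ =>
            ENNReal.ofReal (t ^ a 0)).aemeasurable]
        rw [h1, inner_int (a 0) hw, mul_assoc]
        congr 1
        rw [mul_comm, ← Finset.prod_mul_distrib]
        refine Finset.prod_congr rfl fun j _ => ?_
        rw [← ENNReal.ofReal_mul (pow_nonneg (hw.1 j).1 _), ← pow_add]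
    _ = ((a 0 : ℝ≥0∞) + 1)⁻¹ *
          Iint n (fun j => a j.succ + if (j:ℕ) = 0 then a 0 + 1 else 0) := by
        rw [lintegral_const_mul' _ _ (by simp : ((a 0 : ℝ≥0∞) + 1)⁻¹ ≠ ⊤)]
        rfl


def den {n : ℕ} (a : Fin n → ℕ) (i : Fin n) : ℕ :=
  ((i : ℕ) + 1) + ∑ j ∈ Finset.univ.filter (fun j => j ≤ i), a j

lemma den_zero {n : ℕ} (a : Fin (n+1) → ℕ) : den a 0 = a 0 + 1 := by
  have h : (Finset.univ.filter fun j : Fin (n+1) => j ≤ 0) = {0} := by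
    ext j; simp [Fin.le_zero_iff]
  rw [den, h]
  simp
  omega

lemma den_succ {n : ℕ} (a : Fin (n+1) → ℕ) (i : Fin n) :
    den (fun j => a j.succ + if (j:ℕ) = 0 then a 0 + 1 else 0) i = den a i.succ := by
  unfold den
  rw [Finset.sum_add_distrib]
  have hz : ∃ z : Fin n, (z:ℕ) = 0 := ⟨⟨0, i.pos⟩, rfl⟩
  obtain ⟨z, hz⟩ := hz
  have h1 : ∑ j ∈ Finset.univ.filter (fun j : Fin n => j ≤ i),
      (if (j:ℕ) = 0 then a 0 + 1 else 0) = a 0 + 1 := by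
    have hconv : ∀ j : Fin n, (if (j:ℕ) = 0 then a 0 + 1 else 0)
        = (if j = z then a 0 + 1 else 0) := by
      intro j
      congr 1
      simp [Fin.ext_iff, hz]
    rw [Finset.sum_congr rfl (fun j _ => hconv j), Finset.sum_ite_eq' _ z _]
    have : z ≤ i := by rw [Fin.le_def, hz]; exact Nat.zero_le _
    simp [this]
  have h2 : ∑ j ∈ Finset.univ.filter (fun j : Fin (n+1) => j ≤ i.succ), a j
      = a 0 + ∑ j ∈ Finset.univ.filter (fun j : Fin n => j ≤ i), a j.succ := by
    rw [Finset.sum_filter, Fin.sum_univ_succ]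
    simp only [Fin.zero_le, if_true, Fin.succ_le_succ_iff]
    rw [← Finset.sum_filter]
  rw [h1, h2, Fin.val_succ]
  omega

lemma Iint_eq (n : ℕ) (a : Fin n → ℕ) :
    Iint n a = ∏ i, ((den a i : ℝ≥0∞))⁻¹ := by
  induction n with
  | zero => rw [Iint_zero]; simp
  | succ n ih =>
    rw [Iint_succ, ih, Fin.prod_univ_succ]
    congr 1
    · rw [den_zero]
      push_cast
      rw [add_comm]
    · refine Finset.prod_congr rfl fun i _ => ?_
      rw [den_succ]


noncomputable def lenf {n m : ℕ} (N : Fin m → Finset (Fin n)) (k : Fin m)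
    (x : Fin n → ℝ) : ℝ :=
  if h : (N k).Nonempty then min 1 (1 - (N k).sup' h x) else 1

lemma measurable_lenf {n m : ℕ} (N : Fin m → Finset (Fin n)) (k : Fin m) :
    Measurable (lenf N k) := by
  unfold lenf
  split
  · rename_i h
    have hs : Measurable fun x : Fin n → ℝ => (N k).sup' h x := by
      have := Finset.measurable_sup' h
        (f := fun (i : Fin n) (x : Fin n → ℝ) => x i)
        (fun i _ => measurable_pi_apply i)
      convert this using 2 with x
      rw [Finset.sup'_apply]
    exact measurable_const.min (measurable_const.sub hs)
  · exact measurable_const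

lemma lenf_le_one {n m : ℕ} (N : Fin m → Finset (Fin n)) (k : Fin m)
    (x : Fin n → ℝ) : lenf N k x ≤ 1 := by
  unfold lenf
  split
  · exact min_le_left _ _
  · exact le_refl 1

lemma mem_Icc_lenf_iff {n m : ℕ} (N : Fin m → Finset (Fin n)) (k : Fin m)
    (x : Fin n → ℝ) (c : ℝ) :
    c ∈ Set.Icc 0 (lenf N k x) ↔ (c ∈ Set.Icc (0:ℝ) 1 ∧ ∀ i ∈ N k, x i + c ≤ 1) := by
  unfold lenf
  split
  · rename_i h
    simp only [Set.mem_Icc, le_min_iff]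
    constructor
    · rintro ⟨h0, h1, h2⟩
      refine ⟨⟨h0, h1⟩, fun i hi => ?_⟩
      have := (N k).le_sup' x hi
      linarith
    · rintro ⟨⟨h0, h1⟩, h2⟩
      refine ⟨h0, h1, ?_⟩
      have hsup : (N k).sup' h x ≤ 1 - c := Finset.sup'_le h x fun i hi => by
        linarith [h2 i hi]
      linarith
  · rename_i h
    simp only [Finset.not_nonempty_iff_eq_empty] at h
    simp [h]
lemma vol_eq_outer {n m : ℕ} (N : Fin m → Finset (Fin n)) :
    (volume {z : (Fin n ⊕ Fin m) → ℝ | (∀ v, z v ∈ Set.Icc (0:ℝ) 1) ∧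
        ∀ ⦃v w⦄, (bipartiteOf N).Adj v w → z v + z w ≤ 1}) =
      ∫⁻ x in cube n, ∏ k, ENNReal.ofReal (lenf N k x) := by
  classical
  set e := MeasurableEquiv.sumPiEquivProdPi (fun _ : Fin n ⊕ Fin m => ℝ) with he
  have hmp : MeasurePreserving e (volume : Measure ((Fin n ⊕ Fin m) → ℝ))
      ((volume : Measure (Fin n → ℝ)).prod (volume : Measure (Fin m → ℝ))) :=
    volume_measurePreserving_sumPiEquivProdPi (fun _ => ℝ)
  set Q : Set ((Fin n → ℝ) × (Fin m → ℝ)) :=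
    {p | (∀ i, p.1 i ∈ Set.Icc (0:ℝ) 1) ∧ ∀ k, p.2 k ∈ Set.Icc 0 (lenf N k p.1)} with hQ
  have hQm : MeasurableSet Q := by
    have hQeq : Q = (⋂ i, {p : (Fin n → ℝ) × (Fin m → ℝ) | p.1 i ∈ Set.Icc (0:ℝ) 1}) ∩
        ⋂ k, {p : (Fin n → ℝ) × (Fin m → ℝ) | p.2 k ∈ Set.Icc 0 (lenf N k p.1)} := by
      ext p; simp only [hQ, Set.mem_setOf_eq, Set.mem_inter_iff, Set.mem_iInter]
    rw [hQeq]
    apply MeasurableSet.inter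
    · exact MeasurableSet.iInter fun i =>
        ((measurable_pi_apply i).comp measurable_fst) measurableSet_Icc
    · refine MeasurableSet.iInter fun k => ?_
      have h1 : MeasurableSet {p : (Fin n → ℝ) × (Fin m → ℝ) | 0 ≤ p.2 k} :=
        measurableSet_le measurable_const (measurable_snd.eval)
      have h2 : MeasurableSet {p : (Fin n → ℝ) × (Fin m → ℝ) | p.2 k ≤ lenf N k p.1} :=
        measurableSet_le (measurable_snd.eval)
          ((measurable_lenf N k).comp' measurable_fst)
      have : {p : (Fin n → ℝ) × (Fin m → ℝ) | p.2 k ∈ Set.Icc 0 (lenf N k p.1)}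
          = {p | 0 ≤ p.2 k} ∩ {p | p.2 k ≤ lenf N k p.1} := by
        ext p; simp [Set.mem_Icc]
      rw [this]; exact h1.inter h2
  have hP : {z : (Fin n ⊕ Fin m) → ℝ | (∀ v, z v ∈ Set.Icc (0:ℝ) 1) ∧
      ∀ ⦃v w⦄, (bipartiteOf N).Adj v w → z v + z w ≤ 1} = e ⁻¹' Q := by
    ext z
    have hez : e z = (fun i => z (Sum.inl i), fun k => z (Sum.inr k)) := rfl
    simp only [Set.mem_preimage, hez, hQ, Set.mem_setOf_eq]
    constructor
    · rintro ⟨hz1, hz2⟩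
      refine ⟨fun i => hz1 (Sum.inl i), fun k => ?_⟩
      rw [mem_Icc_lenf_iff]
      exact ⟨hz1 (Sum.inr k), fun i hi => hz2 (show (bipartiteOf N).Adj (Sum.inl i)
        (Sum.inr k) from hi)⟩
    · rintro ⟨h1, h2⟩
      have h2' : ∀ k, z (Sum.inr k) ∈ Set.Icc (0:ℝ) 1 ∧
          ∀ i ∈ N k, z (Sum.inl i) + z (Sum.inr k) ≤ 1 := by
        intro k
        have := (mem_Icc_lenf_iff N k _ _).mp (h2 k)
        exact this
      constructor
      · rintro (i | k)
        · exact h1 i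
        · exact (h2' k).1
      · rintro (i | k) (i' | k') hadj
        · exact absurd hadj (by simp [bipartiteOf])
        · exact (h2' k').2 i hadj
        · rw [add_comm]; exact (h2' k).2 i' hadj
        · exact absurd hadj (by simp [bipartiteOf])
  rw [hP, hmp.measure_preimage hQm.nullMeasurableSet, Measure.prod_apply hQm]
  have hslice : ∀ x : Fin n → ℝ,
      (volume (Prod.mk x ⁻¹' Q) : ℝ≥0∞) =
        (cube n).indicator (fun x => ∏ k, ENNReal.ofReal (lenf N k x)) x := by
    intro x
    by_cases hx : x ∈ cube n
    · have : Prod.mk x ⁻¹' Q = Set.univ.pi (fun k => Set.Icc 0 (lenf N k x)) := by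
        ext y
        simp only [Set.mem_preimage, hQ, Set.mem_setOf_eq, Set.mem_pi, Set.mem_univ,
          forall_const]
        exact ⟨fun h => h.2, fun h => ⟨hx, h⟩⟩
      rw [this, volume_pi_pi, Set.indicator_of_mem hx]
      refine Finset.prod_congr rfl fun k _ => ?_
      rw [Real.volume_Icc, sub_zero]
    · have : Prod.mk x ⁻¹' Q = ∅ := by
        ext y
        simp only [Set.mem_preimage, hQ, Set.mem_setOf_eq, Set.mem_empty_iff_false,
          iff_false, not_and]
        intro h
        exact absurd h hx
      rw [this, measure_empty, Set.indicator_of_notMem hx]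
  simp only [hslice]
  rw [lintegral_indicator (measurableSet_cube n)]
def Dset (n : ℕ) (σ : Equiv.Perm (Fin n)) : Set (Fin n → ℝ) :=
  {x | ∀ ⦃i j⦄, i < j → x (σ j) < x (σ i)}

lemma measurableSet_Dset (n : ℕ) (σ : Equiv.Perm (Fin n)) :
    MeasurableSet (Dset n σ) := by
  have : Dset n σ = ⋂ (i) (j) (_ : i < j), {x : Fin n → ℝ | x (σ j) < x (σ i)} := by
    ext x
    simp only [Dset, Set.mem_setOf_eq, Set.mem_iInter]
    try exact ⟨fun h i j hij => h hij, fun h i j hij => h i j hij⟩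
  rw [this]
  exact .iInter fun i => .iInter fun j => .iInter fun _ =>
    measurableSet_lt (measurable_pi_apply _) (measurable_pi_apply _)

lemma Dset_disjoint (n : ℕ) : Pairwise (Function.onFun Disjoint
    fun σ : Equiv.Perm (Fin n) => cube n ∩ Dset n σ) := by
  intro σ τ hne
  rw [Function.onFun, Set.disjoint_left]
  rintro x ⟨-, hσ⟩ ⟨-, hτ⟩
  apply hne
  have hxinj : Function.Injective x := by
    intro a b hab
    by_contra hne'
    rcases lt_or_gt_of_ne (fun h : σ.symm a = σ.symm b => hne' (by
      simpa using congrArg σ h)) with h | h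
    · have := hσ h; simp only [Equiv.apply_symm_apply] at this; exact absurd hab (by linarith)
    · have := hσ h; simp only [Equiv.apply_symm_apply] at this; exact absurd hab (by linarith)
  have hf : StrictMono fun i : Fin n => x (σ i.rev) := by
    intro i j hij
    exact hσ (Fin.rev_lt_rev.mpr hij)
  have hg : StrictMono fun i : Fin n => x (τ i.rev) := by
    intro i j hij
    exact hτ (Fin.rev_lt_rev.mpr hij)
  have hrange : Set.range (fun i : Fin n => x (σ i.rev)) =
      Set.range (fun i : Fin n => x (τ i.rev)) := by
    have h1 : (fun i : Fin n => x (σ i.rev)) = x ∘ (fun i => σ i.rev) := rfl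
    have h2 : (fun i : Fin n => x (τ i.rev)) = x ∘ (fun i => τ i.rev) := rfl
    rw [h1, h2, Set.range_comp, Set.range_comp,
      (show Function.Surjective (fun i : Fin n => σ i.rev) from
        fun b => ⟨(σ.symm b).rev, by simp⟩).range_eq,
      (show Function.Surjective (fun i : Fin n => τ i.rev) from
        fun b => ⟨(τ.symm b).rev, by simp⟩).range_eq]
  have heq := (hf.range_inj hg).mp hrange
  ext i
  have h3 := congrFun heq i.rev
  simp only [Fin.rev_rev] at h3
  exact congrArg Fin.val (hxinj h3)


lemma eq_coord_null (n : ℕ) {i j : Fin n} (hij : i ≠ j) :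
    volume {x : Fin n → ℝ | x i = x j} = 0 := by
  classical
  set f : (Fin n → ℝ) →ₗ[ℝ] ℝ := (LinearMap.proj i : (Fin n → ℝ) →ₗ[ℝ] ℝ) - LinearMap.proj j with hfdef
  have hset : {x : Fin n → ℝ | x i = x j} = (LinearMap.ker f : Set (Fin n → ℝ)) := by
    ext x
    simp [hfdef, LinearMap.mem_ker, sub_eq_zero]
  rw [hset]
  apply Measure.addHaar_submodule
  intro htop
  have h1 : (Pi.single i 1 : Fin n → ℝ) ∈ LinearMap.ker f := htop ▸ Submodule.mem_top
  rw [LinearMap.mem_ker, hfdef] at h1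
  simp [Pi.single_apply, hij.symm] at h1

lemma cube_ae_union (n : ℕ) :
    (cube n : Set (Fin n → ℝ)) =ᵐ[volume] ⋃ σ : Equiv.Perm (Fin n), (cube n ∩ Dset n σ) := by
  classical
  set U := ⋃ σ : Equiv.Perm (Fin n), (cube n ∩ Dset n σ) with hU
  have hsub : U ⊆ cube n := Set.iUnion_subset fun σ => Set.inter_subset_left
  have hdiff : cube n \ U ⊆ ⋃ (i : Fin n) (j : Fin n) (_ : i ≠ j),
      {x : Fin n → ℝ | x i = x j} := by
    intro x ⟨hxc, hxU⟩
    by_contra hx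
    simp only [Set.mem_iUnion, not_exists, Set.mem_setOf_eq] at hx
    have hxinj : Function.Injective x := by
      intro a b hab
      by_contra hne
      exact hx a b hne hab
    apply hxU
    set τ := Tuple.sort x with hτ
    have hmono : StrictMono (x ∘ τ) :=
      (Tuple.monotone_sort x).strictMono_of_injective (hxinj.comp τ.injective)
    refine Set.mem_iUnion.mpr ⟨(Fin.revPerm.trans τ), hxc, ?_⟩
    intro i j hij
    have : x (τ (Fin.rev j)) < x (τ (Fin.rev i)) := hmono (Fin.rev_lt_rev.mpr hij)
    simpa using this
  have hnull : volume (cube n \ U) = 0 := by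
    refine measure_mono_null hdiff ?_
    refine measure_iUnion_null fun i => measure_iUnion_null fun j => measure_iUnion_null
      fun hij => eq_coord_null n hij
  exact MeasureTheory.ae_eq_set.mpr ⟨hnull, by rw [Set.diff_eq_empty.mpr hsub]; simp⟩

lemma decomp (n : ℕ) (f : (Fin n → ℝ) → ℝ≥0∞) :
    ∫⁻ x in cube n, f x = ∑ σ : Equiv.Perm (Fin n), ∫⁻ x in cube n ∩ Dset n σ, f x := by
  rw [setLIntegral_congr (cube_ae_union n),
    lintegral_iUnion (fun σ => (measurableSet_cube n).inter (measurableSet_Dset n σ))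
      (Dset_disjoint n), tsum_fintype]


lemma key_sigma {n m : ℕ} (N : Fin m → Finset (Fin n)) (σ : Equiv.Perm (Fin n)) :
    ∫⁻ x in cube n ∩ Dset n σ, ∏ k, ENNReal.ofReal (lenf N k x) =
      Iint n (alphaCount N σ) := by
  classical
  set T : (Fin n → ℝ) → (Fin n → ℝ) := fun u v => 1 - u (σ.symm v) with hT
  have h1 : MeasurePreserving (fun (u : Fin n → ℝ) v => u (σ.symm v))
      (volume : Measure (Fin n → ℝ)) volume := by
    have hcoe : ⇑(MeasurableEquiv.piCongrLeft (fun _ : Fin n => ℝ) σ)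
        = fun (u : Fin n → ℝ) v => u (σ.symm v) := by
      funext u v
      conv_lhs => rw [show v = σ (σ.symm v) by simp]
      exact Equiv.piCongrLeft_apply_apply (fun _ => ℝ) σ u (σ.symm v)
    have hmp := volume_measurePreserving_piCongrLeft (fun _ : Fin n => ℝ) σ
    rwa [hcoe] at hmp
  have h2 : MeasurePreserving (fun (w : Fin n → ℝ) v => 1 - w v)
      (volume : Measure (Fin n → ℝ)) volume :=
    volume_preserving_pi (fun _ => Measure.measurePreserving_sub_left volume 1)
  have hTmp : MeasurePreserving T volume volume := h2.comp h1
  have hfm : Measurable fun x : Fin n → ℝ => ∏ k, ENNReal.ofReal (lenf N k x) :=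
    Finset.measurable_prod _ fun k _ =>
      ENNReal.measurable_ofReal.comp' (measurable_lenf N k)
  rw [← hTmp.setLIntegral_comp_preimage
    ((measurableSet_cube n).inter (measurableSet_Dset n σ)) hfm]
  have hpre : T ⁻¹' (cube n ∩ Dset n σ) = ordReg n := by
    ext u
    simp only [Set.mem_preimage, Set.mem_inter_iff, hT, cube, Dset, ordReg,
      Set.mem_setOf_eq, Set.mem_Icc]
    constructor
    · rintro ⟨hc, hd⟩
      refine ⟨fun i => ?_, fun i j hij => ?_⟩
      · have := hc (σ i)
        simp only [Equiv.symm_apply_apply] at this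
        exact ⟨by linarith [this.2], by linarith [this.1]⟩
      · have := hd hij
        simp only [Equiv.symm_apply_apply] at this
        linarith
    · rintro ⟨hmem, hmono⟩
      refine ⟨fun v => ?_, fun i j hij => ?_⟩
      · have := hmem (σ.symm v)
        exact ⟨by linarith [this.2], by linarith [this.1]⟩
      · simp only [Equiv.symm_apply_apply]
        have := hmono hij
        linarith
  rw [hpre, show Iint n (alphaCount N σ)
    = ∫⁻ u in ordReg n, ∏ i, ENNReal.ofReal (u i ^ alphaCount N σ i) from rfl]
  refine setLIntegral_congr_fun (measurableSet_ordReg n) (fun u hu => ?_)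
  rcases isEmpty_or_nonempty (Fin n) with hemp | hne
  · have hNk : ∀ k, N k = ∅ := fun k => Finset.eq_empty_of_isEmpty (N k)
    have : ∀ k, lenf N k (T u) = 1 := by
      intro k
      rw [lenf, dif_neg (by simp [hNk k])]
    simp [this]
  · haveI : Inhabited (Fin n) := Classical.inhabited_of_nonempty hne
    set idx : Fin m → Fin n := fun k =>
      if h : (N k).Nonempty then ((N k).image σ.symm).min' (h.image σ.symm)
      else default with hidx
    have hmin : ∀ (S : Finset (Fin n)) (hS : S.Nonempty), S.inf' hS u = u (S.min' hS) :=
      fun S hS => le_antisymm (Finset.inf'_le _ (S.min'_mem hS))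
        (Finset.le_inf' _ _ fun b hb => hu.2.monotone (S.min'_le b hb))
    have hlen : ∀ k, ∀ h : (N k).Nonempty, lenf N k (T u) = u (idx k) := by
      intro k h
      rw [lenf, dif_pos h]
      have hA : ∀ v ∈ N k, (N k).inf' h (fun v => u (σ.symm v)) ≤ u (σ.symm v) :=
        fun v hv => Finset.inf'_le _ hv
      have hB : ∀ v ∈ N k, 1 - u (σ.symm v) ≤ (N k).sup' h (T u) := by
        intro v hv
        have := Finset.le_sup' (T u) hv
        simpa only [hT] using this
      have hinf : (N k).sup' h (T u) = 1 - (N k).inf' h (fun v => u (σ.symm v)) := by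
        apply le_antisymm
        · exact Finset.sup'_le _ _ fun v hv => by
            simp only [hT]; linarith [hA v hv]
        · have hle : 1 - (N k).sup' h (T u) ≤ (N k).inf' h (fun v => u (σ.symm v)) :=
            Finset.le_inf' _ _ fun v hv => by linarith [hB v hv]
          linarith
      have himg : (N k).inf' h (fun v => u (σ.symm v))
          = ((N k).image σ.symm).inf' (h.image σ.symm) u := by
        apply le_antisymm
        · apply Finset.le_inf'
          intro b hb
          obtain ⟨v, hv, rfl⟩ := Finset.mem_image.mp hb
          exact Finset.inf'_le _ hv
        · apply Finset.le_inf'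
          intro v hv
          exact Finset.inf'_le _ (Finset.mem_image_of_mem _ hv)
      rw [hinf, himg, hmin _ (h.image σ.symm), sub_sub_cancel]
      simp only [hidx, dif_pos h]
      exact min_eq_right (hu.1 _).2
    calc ∏ k, ENNReal.ofReal (lenf N k (T u))
        = ∏ k ∈ Finset.univ.filter (fun k => (N k).Nonempty),
            ENNReal.ofReal (u (idx k)) := by
          rw [← Finset.prod_filter_mul_prod_filter_not Finset.univ
            (fun k => (N k).Nonempty)]
          have hone : ∏ k ∈ Finset.univ.filter (fun k => ¬ (N k).Nonempty),
              ENNReal.ofReal (lenf N k (T u)) = 1 := by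
            apply Finset.prod_eq_one
            intro k hk
            rw [Finset.mem_filter] at hk
            rw [lenf, dif_neg hk.2]
            simp
          rw [hone, mul_one]
          exact Finset.prod_congr rfl fun k hk => by
            rw [hlen k (Finset.mem_filter.mp hk).2]
      _ = ∏ i, ∏ k ∈ (Finset.univ.filter (fun k => (N k).Nonempty)).filter
            (fun k => idx k = i), ENNReal.ofReal (u (idx k)) :=
          (Finset.prod_fiberwise_of_maps_to (fun k _ => Finset.mem_univ _) _).symm
      _ = ∏ i, ENNReal.ofReal (u i ^ alphaCount N σ i) := by
          refine Finset.prod_congr rfl fun i _ => ?_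
          have hcard : ((Finset.univ.filter (fun k => (N k).Nonempty)).filter
              (fun k => idx k = i)).card = alphaCount N σ i := by
            unfold alphaCount
            refine congrArg Finset.card ?_
            ext k
            simp only [Finset.mem_filter, Finset.mem_univ, true_and]
            constructor
            · rintro ⟨hne', hidxk⟩
              subst hidxk
              rw [hidx] at *
              simp only [dif_pos hne'] at *
              constructor
              · obtain ⟨v, hv, heq⟩ := Finset.mem_image.mp
                  (((N k).image σ.symm).min'_mem (hne'.image σ.symm))
                rw [← heq]
                simpa using hv
              · intro j hj hmem
                have hjmem : j ∈ (N k).image σ.symm := by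
                  simpa using Finset.mem_image_of_mem σ.symm hmem
                exact absurd (Finset.min'_le _ _ hjmem) (not_le.mpr hj)
            · rintro ⟨hσi, hminimal⟩
              have hne' : (N k).Nonempty := ⟨σ i, hσi⟩
              refine ⟨hne', ?_⟩
              rw [hidx]
              simp only [dif_pos hne']
              apply le_antisymm
              · apply Finset.min'_le
                simpa using Finset.mem_image_of_mem σ.symm hσi
              · apply Finset.le_min'
                intro b hb
                obtain ⟨v, hv, rfl⟩ := Finset.mem_image.mp hb
                by_contra hlt
                push_neg at hlt
                exact hminimal _ hlt (by simpa using hv)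
          rw [Finset.prod_congr rfl (fun k hk =>
            congrArg (fun z => ENNReal.ofReal (u z))
              ((Finset.mem_filter.mp hk).2 : idx k = i)),
            Finset.prod_const, ← ENNReal.ofReal_pow (hu.1 i).1, hcard]


lemma den_ne_zero {n : ℕ} (a : Fin n → ℕ) (i : Fin n) : den a i ≠ 0 := by
  unfold den; omega

end VolB

open VolB in
/-- The volume of the graph polytope of a bipartite graph `B`:
`vol(B) = Σ_{σ ∈ S_n} Π_{i=1}^n 1/(i + Σ_{j=1}^i α_{j,σ})`. -/
theorem vol_bipartite (n m : ℕ) (N : Fin m → Finset (Fin n)) :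
    gvol (bipartiteOf N) =
      ∑ σ : Equiv.Perm (Fin n), ∏ i : Fin n,
        (1 : ℝ) / (((i : ℕ) + 1 : ℕ) +
          ∑ j ∈ Finset.univ.filter (fun j : Fin n => j ≤ i),
            (alphaCount N σ j : ℝ)) := by
  have hmain : (volume {x : (Fin n ⊕ Fin m) → ℝ | (∀ i, x i ∈ Set.Icc (0:ℝ) 1) ∧
      ∀ ⦃i j⦄, (bipartiteOf N).Adj i j → x i + x j ≤ 1}) =
      ∑ σ : Equiv.Perm (Fin n), ∏ i, ((den (alphaCount N σ) i : ℝ≥0∞))⁻¹ := by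
    rw [vol_eq_outer N, decomp n]
    exact Finset.sum_congr rfl fun σ _ => by rw [key_sigma N σ, Iint_eq]
  rw [gvol, hmain, ENNReal.toReal_sum]
  · refine Finset.sum_congr rfl fun σ _ => ?_
    rw [ENNReal.toReal_prod]
    refine Finset.prod_congr rfl fun i _ => ?_
    rw [ENNReal.toReal_inv, one_div]
    congr 1
    rw [show ((den (alphaCount N σ) i : ℝ≥0∞)).toReal = (den (alphaCount N σ) i : ℝ) by simp]
    unfold den
    push_cast
    ring
  · intro σ _
    exact (ENNReal.prod_lt_top fun i _ => ENNReal.inv_lt_top.mpr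
      (by exact_mod_cast Nat.pos_of_ne_zero (den_ne_zero _ i))).ne
end

section
/- Let T be the linear operator on L²(0,1) defined by (Tg)(t) = ∫_0^{1−t} g(s) ds. Then T is a compact self-adjoint operator, and for every integer k ∈ ℤ the function t ↦ cos(π(4k+1)t/2) is an eigenfunction of T with eigenvalue 2/(π(4k+1)); in particular T(cos(π(4k+1)·/2)) = (2/(π(4k+1)))·cos(π(4k+1)·/2) in L²(0,1). -/
open MeasureTheory Real

/-- The measure defining `L²(0,1)`: Lebesgue measure restricted to `(0,1)`. -/
noncomputable def mu01 : Measure ℝ := volume.restrict (Set.Ioo (0:ℝ) 1)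

section OpTSection
open Set Filter Topology intervalIntegral
open scoped ENNReal NNReal

namespace OpT

instance : IsProbabilityMeasure mu01 := by
  constructor
  simp [mu01, Real.volume_Ioo]

instance : NullSingletonClass mu01 := by unfold mu01; infer_instance

lemma mu01_univ_nnreal : measureUnivNNReal mu01 = 1 := by
  simp [measureUnivNNReal, measure_univ]

noncomputable def ker (t : ℝ) : Lp ℝ 2 mu01 :=
  indicatorConstLp 2 (measurableSet_Ioo : MeasurableSet (Set.Ioo (0:ℝ) (1 - t)))
    (measure_ne_top _ _) (1:ℝ)

lemma norm_ker_le (t : ℝ) : ‖ker t‖ ≤ 1 := by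
  refine norm_indicatorConstLp_le.trans ?_
  rw [norm_one, one_mul]
  refine Real.rpow_le_one ENNReal.toReal_nonneg ?_ (by norm_num)
  exact ENNReal.toReal_le_of_le_ofReal zero_le_one (by simpa using prob_le_one (μ := mu01))

lemma indicator_diff {a b x : ℝ} (hab : a ≤ b) (hb : b < 1) :
    (Set.Ioo (0:ℝ) (1-a)).indicator (fun _ => (1:ℝ)) x
      - (Set.Ioo (0:ℝ) (1-b)).indicator (fun _ => (1:ℝ)) x
      = (Set.Ico (1-b) (1-a)).indicator (fun _ => (1:ℝ)) x := by
  rcases lt_or_ge x (1-b) with hxb | hxb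
  · rcases le_or_gt x 0 with hx0 | hx0
    · rw [Set.indicator_of_notMem (by simp only [Set.mem_Ioo, not_and]; intro h; linarith),
        Set.indicator_of_notMem (by simp only [Set.mem_Ioo, not_and]; intro h; linarith),
        Set.indicator_of_notMem (by simp only [Set.mem_Ico, not_and]; intro h; linarith)]
      ring
    · rw [Set.indicator_of_mem (Set.mem_Ioo.mpr ⟨hx0, by linarith⟩),
        Set.indicator_of_mem (Set.mem_Ioo.mpr ⟨hx0, hxb⟩),
        Set.indicator_of_notMem (by simp only [Set.mem_Ico, not_and]; intro h; linarith)]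
      ring
  · rcases lt_or_ge x (1-a) with hxa | hxa
    · rw [Set.indicator_of_mem (Set.mem_Ioo.mpr ⟨by linarith, hxa⟩),
        Set.indicator_of_notMem (by simp only [Set.mem_Ioo, not_and]; intro h; linarith),
        Set.indicator_of_mem (Set.mem_Ico.mpr ⟨hxb, hxa⟩)]
      ring
    · rw [Set.indicator_of_notMem (by simp only [Set.mem_Ioo, not_and]; intro h; linarith),
        Set.indicator_of_notMem (by simp only [Set.mem_Ioo, not_and]; intro h; linarith),
        Set.indicator_of_notMem (by simp only [Set.mem_Ico, not_and]; intro h; linarith)]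
      ring

lemma ker_sub {a b : ℝ} (hab : a ≤ b) (hb : b < 1) :
    ‖ker a - ker b‖ ≤ Real.sqrt (b - a) := by
  have hset : MeasurableSet (Set.Ico (1-b) (1-a)) := measurableSet_Ico
  have hker : ker a - ker b
      = indicatorConstLp 2 hset (measure_ne_top _ _) (1:ℝ) := by
    apply Lp.ext
    have h1 := indicatorConstLp_coeFn (μ := mu01) (p := 2)
      (hs := (measurableSet_Ioo : MeasurableSet (Set.Ioo (0:ℝ) (1 - a))))
      (hμs := measure_ne_top _ _) (c := (1:ℝ))
    have h2 := indicatorConstLp_coeFn (μ := mu01) (p := 2)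
      (hs := (measurableSet_Ioo : MeasurableSet (Set.Ioo (0:ℝ) (1 - b))))
      (hμs := measure_ne_top _ _) (c := (1:ℝ))
    have h3 := indicatorConstLp_coeFn (μ := mu01) (p := 2)
      (hs := hset) (hμs := measure_ne_top _ _) (c := (1:ℝ))
    filter_upwards [Lp.coeFn_sub (ker a) (ker b), h1, h2, h3] with x hx hx1 hx2 hx3
    simp only [Pi.sub_apply] at hx
    rw [hx, hx3]
    simp only [ker]
    rw [hx1, hx2, indicator_diff hab hb]
  rw [hker]
  refine norm_indicatorConstLp_le.trans ?_
  rw [norm_one, one_mul]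
  have hle : (mu01 (Set.Ico (1-b) (1-a))).toReal ≤ b - a := by
    refine ENNReal.toReal_le_of_le_ofReal (by linarith) ?_
    rw [mu01, Measure.restrict_apply measurableSet_Ico]
    refine le_trans (measure_mono Set.inter_subset_left) ?_
    rw [Real.volume_Ico]
    exact ENNReal.ofReal_le_ofReal (by linarith)
  calc (mu01 (Set.Ico (1-b) (1-a))).toReal ^ (1 / (2:ℝ≥0∞).toReal)
      ≤ (b - a) ^ (1 / (2:ℝ≥0∞).toReal) :=
        Real.rpow_le_rpow ENNReal.toReal_nonneg hle (by norm_num)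
    _ = Real.sqrt (b - a) := by
        rw [Real.sqrt_eq_rpow]; norm_num

noncomputable def fInt (g : Lp ℝ 2 mu01) (t : ℝ) : ℝ := inner (𝕜 := ℝ) (ker t) g

lemma fInt_eq (g : Lp ℝ 2 mu01) (t : ℝ) :
    fInt g t = ∫ s in Set.Ioo (0:ℝ) (1-t), g s ∂mu01 := by
  rw [fInt, ker, L2.inner_indicatorConstLp_eq_setIntegral_inner]
  simp [RCLike.inner_apply, starRingEnd_apply]

lemma abs_fInt_le (g : Lp ℝ 2 mu01) (t : ℝ) : |fInt g t| ≤ ‖g‖ := by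
  rw [fInt, ← Real.norm_eq_abs]
  refine (norm_inner_le_norm _ _).trans ?_
  calc ‖ker t‖ * ‖g‖ ≤ 1 * ‖g‖ := by
        exact mul_le_mul_of_nonneg_right (norm_ker_le t) (norm_nonneg g)
    _ = ‖g‖ := one_mul _

lemma ae_mem01 : ∀ᵐ t ∂mu01, t ∈ Set.Ioo (0:ℝ) 1 :=
  ae_restrict_mem measurableSet_Ioo

lemma restrict_eq {y : ℝ} (hy : y ≤ 1) :
    mu01.restrict (Set.Ioo 0 y) = volume.restrict (Set.Ioo 0 y) := by
  rw [mu01, Measure.restrict_restrict measurableSet_Ioo,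
    Set.inter_eq_left.mpr (Set.Ioo_subset_Ioo_right hy)]

lemma fInt_ae (g : Lp ℝ 2 mu01) :
    fInt g =ᵐ[mu01] fun t => ∫ s in (0:ℝ)..(1-t), (g : ℝ → ℝ) s := by
  filter_upwards [ae_mem01] with t ht
  obtain ⟨ht0, ht1⟩ := ht
  rw [fInt_eq, restrict_eq (by linarith),
    intervalIntegral.integral_of_le (by linarith : (0:ℝ) ≤ 1 - t),
    integral_Ioc_eq_integral_Ioo]

lemma memL2 (g : Lp ℝ 2 mu01) : MemLp (fInt g) 2 mu01 := by
  have hg1 : Integrable (g : ℝ → ℝ) mu01 := (Lp.memLp g).integrable (by norm_num)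
  set G := (Set.Ioo (0:ℝ) 1).indicator (g : ℝ → ℝ) with hG
  have hGint : Integrable G volume := by
    rw [hG, integrable_indicator_iff measurableSet_Ioo]
    exact hg1
  have hcont : Continuous fun t : ℝ => ∫ s in (0:ℝ)..(1-t), G s :=
    (hGint.continuous_primitive 0).comp (continuous_const.sub continuous_id)
  have hae : fInt g =ᵐ[mu01] fun t => ∫ s in (0:ℝ)..(1-t), G s := by
    refine (fInt_ae g).trans ?_
    filter_upwards [ae_mem01] with t ht
    obtain ⟨ht0, ht1⟩ := ht
    rw [intervalIntegral.integral_of_le (by linarith), intervalIntegral.integral_of_le (by linarith)]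
    refine setIntegral_congr_fun measurableSet_Ioc fun x hx => ?_
    rw [hG, Set.indicator_of_mem (Set.mem_Ioo.mpr ⟨hx.1, by linarith [hx.2]⟩)]
  have hmeas : AEStronglyMeasurable (fInt g) mu01 :=
    hcont.aestronglyMeasurable.congr hae.symm
  exact MemLp.of_bound hmeas ‖g‖ (Eventually.of_forall fun t => by
    rw [Real.norm_eq_abs]; exact abs_fInt_le g t)

noncomputable def Tfun (g : Lp ℝ 2 mu01) : Lp ℝ 2 mu01 := (memL2 g).toLp (fInt g)

lemma Tfun_coe (g : Lp ℝ 2 mu01) : (Tfun g : ℝ → ℝ) =ᵐ[mu01] fInt g := MemLp.coeFn_toLp _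

lemma norm_Tfun_le (g : Lp ℝ 2 mu01) : ‖Tfun g‖ ≤ 1 * ‖g‖ := by
  have hb : ∀ᵐ t ∂mu01, ‖(Tfun g : ℝ → ℝ) t‖ ≤ ‖g‖ := by
    filter_upwards [Tfun_coe g] with t ht
    rw [ht, Real.norm_eq_abs]; exact abs_fInt_le g t
  have := Lp.norm_le_of_ae_bound (f := Tfun g) (norm_nonneg g) hb
  rw [mu01_univ_nnreal] at this
  simpa using this

noncomputable def T : Lp ℝ 2 mu01 →L[ℝ] Lp ℝ 2 mu01 :=
  LinearMap.mkContinuous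
    { toFun := Tfun
      map_add' := fun g h => by
        have hf : fInt (g + h) = fInt g + fInt h := by
          funext t; simp [fInt, inner_add_right]
        simp only [Tfun]
        rw [← MemLp.toLp_add (memL2 g) (memL2 h)]
        exact MemLp.toLp_congr _ _ (by rw [hf])
      map_smul' := fun c g => by
        have hf : fInt (c • g) = c • fInt g := by
          funext t; simp [fInt, inner_smul_right]
        simp only [Tfun, RingHom.id_apply]
        rw [← MemLp.toLp_const_smul c (memL2 g)]
        exact MemLp.toLp_congr _ _ (by rw [hf]) }
    1 norm_Tfun_le

lemma T_apply (g : Lp ℝ 2 mu01) : T g = Tfun g := rfl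

lemma T_spec (g : Lp ℝ 2 mu01) :
    (T g : ℝ → ℝ) =ᵐ[mu01] fun t => ∫ s in (0:ℝ)..(1 - t), (g : ℝ → ℝ) s := by
  rw [T_apply]; exact (Tfun_coe g).trans (fInt_ae g)

lemma T_coe_fInt (g : Lp ℝ 2 mu01) : (T g : ℝ → ℝ) =ᵐ[mu01] fInt g := Tfun_coe g


lemma inner_eq_integral (u v : Lp ℝ 2 mu01) :
    inner (𝕜 := ℝ) u v = ∫ a, u a * v a ∂mu01 := by
  rw [L2.inner_def]
  simp [RCLike.inner_apply, starRingEnd_apply]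
  exact integral_congr_ae (Eventually.of_forall fun a => mul_comm _ _)

lemma hint (g : Lp ℝ 2 mu01) : Integrable (g : ℝ → ℝ) mu01 :=
  (Lp.memLp g).integrable (by norm_num)

lemma T_symm : ∀ g h : Lp ℝ 2 mu01,
    inner (𝕜 := ℝ) (T g) h = inner (𝕜 := ℝ) g (T h) := by
  intro g h
  set S : Set (ℝ × ℝ) := {p : ℝ × ℝ | 0 < p.2 ∧ p.2 < 1 - p.1} with hS
  have hSmeas : MeasurableSet S := by
    apply MeasurableSet.inter
    · exact measurableSet_lt measurable_const measurable_snd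
    · exact measurableSet_lt measurable_snd (measurable_const.sub measurable_fst)
  set Φ : ℝ × ℝ → ℝ := S.indicator (fun p => (g : ℝ → ℝ) p.2 * (h : ℝ → ℝ) p.1) with hΦ
  have hΦmeas : AEStronglyMeasurable Φ (mu01.prod mu01) := by
    refine AEStronglyMeasurable.indicator ?_ hSmeas
    exact ((Lp.aestronglyMeasurable g).comp_snd).mul ((Lp.aestronglyMeasurable h).comp_fst)
  have hprod : Integrable (fun p : ℝ × ℝ => (h : ℝ → ℝ) p.1 * (g : ℝ → ℝ) p.2)
      (mu01.prod mu01) := (hint h).mul_prod (hint g)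
  have hΦint : Integrable Φ (mu01.prod mu01) := by
    refine Integrable.mono' hprod.norm hΦmeas ?_
    refine Eventually.of_forall fun p => ?_
    calc ‖Φ p‖ ≤ ‖(g : ℝ → ℝ) p.2 * (h : ℝ → ℝ) p.1‖ := norm_indicator_le_norm_self _ _
      _ = ‖(h : ℝ → ℝ) p.1 * (g : ℝ → ℝ) p.2‖ := by rw [mul_comm]
  -- slice in t
  have key1 : ∀ t : ℝ, ∫ s, Φ (t, s) ∂mu01 = fInt g t * (h : ℝ → ℝ) t := by
    intro t
    have hpt : ∀ s : ℝ, Φ (t, s)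
        = (Set.Ioo (0:ℝ) (1-t)).indicator (fun s => (g : ℝ → ℝ) s * (h : ℝ → ℝ) t) s := by
      intro s
      by_cases hs : s ∈ Set.Ioo (0:ℝ) (1-t)
      · rw [hΦ, Set.indicator_of_mem (show (t,s) ∈ S from ⟨hs.1, hs.2⟩),
          Set.indicator_of_mem hs]
      · rw [hΦ, Set.indicator_of_notMem (show (t,s) ∉ S from fun hc => hs ⟨hc.1, hc.2⟩),
          Set.indicator_of_notMem hs]
    simp_rw [hpt]
    rw [MeasureTheory.integral_indicator measurableSet_Ioo, MeasureTheory.integral_mul_const, fInt_eq]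
  have key2 : ∀ᵐ s ∂mu01, ∫ t, Φ (t, s) ∂mu01 = (g : ℝ → ℝ) s * fInt h s := by
    filter_upwards [ae_mem01] with s hs
    obtain ⟨hs0, hs1⟩ := hs
    have hpt : ∀ t : ℝ, Φ (t, s)
        = (Set.Iio (1 - s)).indicator (fun t => (g : ℝ → ℝ) s * (h : ℝ → ℝ) t) t := by
      intro t
      by_cases ht : t < 1 - s
      · rw [hΦ, Set.indicator_of_mem (show (t,s) ∈ S from ⟨hs0, by linarith⟩),
          Set.indicator_of_mem (show t ∈ Set.Iio (1-s) from ht)]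
      · rw [hΦ, Set.indicator_of_notMem (show (t,s) ∉ S from fun hc => ht (by
          have := hc.2; linarith)),
          Set.indicator_of_notMem (show t ∉ Set.Iio (1-s) by simpa using ht)]
    simp_rw [hpt]
    rw [MeasureTheory.integral_indicator measurableSet_Iio, MeasureTheory.integral_const_mul, fInt_eq]
    congr 1
    have : mu01.restrict (Set.Iio (1-s)) = mu01.restrict (Set.Ioo 0 (1-s)) := by
      rw [mu01, Measure.restrict_restrict measurableSet_Iio,
        Measure.restrict_restrict measurableSet_Ioo]
      congr 1
      ext x
      simp only [Set.mem_inter_iff, Set.mem_Iio, Set.mem_Ioo]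
      constructor
      · rintro ⟨hx, hx0, hx1⟩; exact ⟨⟨hx0, hx⟩, hx0, hx1⟩
      · rintro ⟨⟨hx0, hx⟩, _⟩; exact ⟨hx, hx0, by linarith⟩
    rw [this]
  calc inner (𝕜 := ℝ) (T g) h = ∫ t, (T g : ℝ → ℝ) t * (h : ℝ → ℝ) t ∂mu01 :=
        inner_eq_integral _ _
    _ = ∫ t, fInt g t * (h : ℝ → ℝ) t ∂mu01 := by
        refine integral_congr_ae ?_
        filter_upwards [T_coe_fInt g] with t ht
        rw [ht]
    _ = ∫ t, (∫ s, Φ (t, s) ∂mu01) ∂mu01 := by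
        refine integral_congr_ae (Eventually.of_forall fun t => (key1 t).symm)
    _ = ∫ s, (∫ t, Φ (t, s) ∂mu01) ∂mu01 := integral_integral_swap hΦint
    _ = ∫ s, (g : ℝ → ℝ) s * fInt h s ∂mu01 := integral_congr_ae key2
    _ = ∫ s, (g : ℝ → ℝ) s * (T h : ℝ → ℝ) s ∂mu01 := by
        refine integral_congr_ae ?_
        filter_upwards [T_coe_fInt h] with s hsx
        rw [hsx]
    _ = inner (𝕜 := ℝ) g (T h) := (inner_eq_integral _ _).symm

lemma T_selfAdjoint : IsSelfAdjoint T := by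
  rw [ContinuousLinearMap.isSelfAdjoint_iff_isSymmetric]
  intro g h
  simpa using T_symm g h


lemma isCompact_rankOne {E F : Type*} [NormedAddCommGroup E] [NormedSpace ℝ E]
    [NormedAddCommGroup F] [NormedSpace ℝ F] (φ : E →L[ℝ] ℝ) (b : F) :
    IsCompactOperator (φ.smulRight b) := by
  refine ⟨(fun c : ℝ => c • b) '' Set.Icc (-(‖φ‖+1)) (‖φ‖+1), ?_, ?_⟩
  · exact isCompact_Icc.image (continuous_id.smul continuous_const)
  · refine Filter.mem_of_superset (Metric.ball_mem_nhds 0 one_pos) ?_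
    intro x hx
    have hx1 : ‖x‖ < 1 := by simpa [Metric.mem_ball] using hx
    have hb : |φ x| ≤ ‖φ‖ := by
      calc |φ x| = ‖φ x‖ := (Real.norm_eq_abs _).symm
        _ ≤ ‖φ‖ * ‖x‖ := φ.le_opNorm x
        _ ≤ ‖φ‖ * 1 := mul_le_mul_of_nonneg_left hx1.le (norm_nonneg φ)
        _ = ‖φ‖ := mul_one _
    have := abs_le.mp hb
    exact ⟨φ x, ⟨by linarith, by linarith⟩, rfl⟩

noncomputable def chi (n i : ℕ) : Lp ℝ 2 mu01 :=
  indicatorConstLp 2 (measurableSet_Ico : MeasurableSet (Set.Ico ((i:ℝ)/n) (((i:ℝ)+1)/n)))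
    (measure_ne_top _ _) (1:ℝ)

noncomputable def Tapp (n : ℕ) : Lp ℝ 2 mu01 →L[ℝ] Lp ℝ 2 mu01 :=
  ∑ i ∈ Finset.range n, (innerSL ℝ (ker ((i:ℝ)/n))).smulRight (chi n i)

lemma Tapp_compact (n : ℕ) : IsCompactOperator (Tapp n) := by
  classical
  rw [Tapp]
  induction (Finset.range n) using Finset.induction_on with
  | empty => simpa using isCompactOperator_zero
  | @insert a s hnotmem ih =>
      rw [Finset.sum_insert hnotmem]
      exact (isCompact_rankOne _ _).add ih

lemma coeFn_sum {ι : Type*} (s : Finset ι) (f : ι → Lp ℝ 2 mu01) :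
    (↑(∑ i ∈ s, f i) : ℝ → ℝ) =ᵐ[mu01] fun t => ∑ i ∈ s, (f i : ℝ → ℝ) t := by
  classical
  induction s using Finset.induction_on with
  | empty => simp only [Finset.sum_empty]; exact Lp.coeFn_zero (E := ℝ) (p := 2) (μ := mu01)
  | @insert a s hnotmem ih =>
      rw [Finset.sum_insert hnotmem]
      refine (Lp.coeFn_add _ _).trans ?_
      filter_upwards [ih] with t ht
      simp only [Pi.add_apply, ht, Finset.sum_insert hnotmem]

lemma Tapp_coe (n : ℕ) (g : Lp ℝ 2 mu01) :
    (Tapp n g : ℝ → ℝ) =ᵐ[mu01] fun t => ∑ i ∈ Finset.range n,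
      (Set.Ico ((i:ℝ)/n) (((i:ℝ)+1)/n)).indicator
        (fun _ => inner (𝕜 := ℝ) (ker ((i:ℝ)/n)) g) t := by
  have h1 : Tapp n g = ∑ i ∈ Finset.range n,
      (inner (𝕜 := ℝ) (ker ((i:ℝ)/n)) g) • chi n i := by
    rw [Tapp, ContinuousLinearMap.sum_apply]
    refine Finset.sum_congr rfl fun i _ => ?_
    rw [ContinuousLinearMap.smulRight_apply, innerSL_apply_apply]
  rw [h1]
  refine (coeFn_sum _ _).trans ?_
  have h2 : ∀ᵐ t ∂mu01, ∀ i ∈ Finset.range n,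
      ((((inner (𝕜 := ℝ) (ker ((i:ℝ)/n)) g) • chi n i : Lp ℝ 2 mu01)) : ℝ → ℝ) t
        = (Set.Ico ((i:ℝ)/n) (((i:ℝ)+1)/n)).indicator
            (fun _ => inner (𝕜 := ℝ) (ker ((i:ℝ)/n)) g) t := by
    rw [Filter.eventually_all_finset]
    intro i _
    filter_upwards [Lp.coeFn_smul (inner (𝕜 := ℝ) (ker ((i:ℝ)/n)) g) (chi n i),
      indicatorConstLp_coeFn (μ := mu01) (p := 2)
        (hs := (measurableSet_Ico : MeasurableSet (Set.Ico ((i:ℝ)/n) (((i:ℝ)+1)/n))))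
        (hμs := measure_ne_top _ _) (c := (1:ℝ))] with t ht hct
    rw [ht]
    simp only [Pi.smul_apply, chi, hct, smul_eq_mul]
    by_cases hmem : t ∈ Set.Ico ((i:ℝ)/n) (((i:ℝ)+1)/n)
    · rw [Set.indicator_of_mem hmem, Set.indicator_of_mem hmem, mul_one]
    · rw [Set.indicator_of_notMem hmem, Set.indicator_of_notMem hmem, mul_zero]
  filter_upwards [h2] with t ht
  exact Finset.sum_congr rfl fun i hi => ht i hi

lemma T_sub_Tapp (n : ℕ) (hn : 0 < n) : ‖T - Tapp n‖ ≤ Real.sqrt (1/n) := by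
  refine ContinuousLinearMap.opNorm_le_bound _ (Real.sqrt_nonneg _) fun g => ?_
  have hb : ∀ᵐ t ∂mu01, ‖((T - Tapp n) g : ℝ → ℝ) t‖ ≤ Real.sqrt (1/n) * ‖g‖ := by
    filter_upwards [Lp.coeFn_sub (T g) (Tapp n g), T_coe_fInt g, Tapp_coe n g, ae_mem01]
      with t hsub hT hTapp ht
    obtain ⟨ht0, ht1⟩ := ht
    have hnR : (0:ℝ) < n := Nat.cast_pos.mpr hn
    set j : ℕ := (⌊(n:ℝ) * t⌋).toNat with hj
    have hfl0 : (0:ℤ) ≤ ⌊(n:ℝ) * t⌋ :=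
      Int.floor_nonneg.mpr (le_of_lt (mul_pos hnR ht0))
    have hcast : ((j:ℕ):ℝ) = ((⌊(n:ℝ)*t⌋ : ℤ) : ℝ) := by
      rw [hj]; exact_mod_cast Int.toNat_of_nonneg hfl0
    have hjle : (j:ℝ) ≤ (n:ℝ) * t := by
      rw [hcast]; exact Int.floor_le _
    have hjlt : (n:ℝ) * t < (j:ℝ) + 1 := by
      rw [hcast]; exact Int.lt_floor_add_one _
    have hjn : j ∈ Finset.range n := by
      rw [Finset.mem_range, ← Nat.cast_lt (α := ℝ)]
      nlinarith
    have hmem : t ∈ Set.Ico ((j:ℝ)/n) (((j:ℝ)+1)/n) :=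
      ⟨(div_le_iff₀ hnR).mpr (by nlinarith), (lt_div_iff₀ hnR).mpr (by nlinarith)⟩
    have hsum : (∑ i ∈ Finset.range n,
        (Set.Ico ((i:ℝ)/n) (((i:ℝ)+1)/n)).indicator
          (fun _ => inner (𝕜 := ℝ) (ker ((i:ℝ)/n)) g) t)
        = inner (𝕜 := ℝ) (ker ((j:ℝ)/n)) g := by
      rw [Finset.sum_eq_single_of_mem j hjn]
      · rw [Set.indicator_of_mem hmem]
      · intro i _ hij
        refine Set.indicator_of_notMem ?_ _
        rintro ⟨hi1, hi2⟩
        apply hij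
        have h1 : (i:ℝ) ≤ t * (n:ℝ) := (div_le_iff₀ hnR).mp hi1
        have h2 : t * (n:ℝ) < (i:ℝ) + 1 := (lt_div_iff₀ hnR).mp hi2
        have hfe : ⌊(n:ℝ) * t⌋ = (i : ℤ) := by
          rw [Int.floor_eq_iff]
          constructor
          · push_cast; nlinarith
          · push_cast; nlinarith
        rw [hj, hfe, Int.toNat_natCast]
    simp only [ContinuousLinearMap.sub_apply]
    rw [hsub, Pi.sub_apply, hT, hTapp, hsum, fInt, ← inner_sub_left]
    calc ‖inner (𝕜 := ℝ) (ker t - ker ((j:ℝ)/n)) g‖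
        ≤ ‖ker t - ker ((j:ℝ)/n)‖ * ‖g‖ := norm_inner_le_norm _ _
      _ ≤ Real.sqrt (1/n) * ‖g‖ := by
          refine mul_le_mul_of_nonneg_right ?_ (norm_nonneg g)
          rw [norm_sub_rev]
          refine (ker_sub ((div_le_iff₀ hnR).mpr (by nlinarith)) ht1).trans ?_
          refine Real.sqrt_le_sqrt ?_
          have h4 : t < (j:ℝ)/n + 1/n := by
            rw [← add_div]; exact hmem.2
          linarith
  have := Lp.norm_le_of_ae_bound (f := (T - Tapp n) g)
    (by positivity) hb
  rw [mu01_univ_nnreal] at this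
  simpa using this

lemma T_compact : IsCompactOperator T := by
  have htend : Tendsto (fun n : ℕ => Tapp n) atTop (𝓝 T) := by
    rw [tendsto_iff_norm_sub_tendsto_zero]
    refine squeeze_zero' (g := fun n : ℕ => Real.sqrt (1/(n:ℝ))) ?_ ?_ ?_
    · exact Eventually.of_forall fun n => norm_nonneg _
    · filter_upwards [eventually_gt_atTop 0] with n hn
      rw [norm_sub_rev]
      exact T_sub_Tapp n hn
    · have h1 : Tendsto (fun n : ℕ => (1:ℝ)/n) atTop (𝓝 0) :=
        tendsto_one_div_atTop_nhds_zero_nat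
      have h2 := (Real.continuous_sqrt.tendsto 0).comp h1
      rw [Real.sqrt_zero] at h2
      exact h2
  exact isCompactOperator_of_tendsto htend (Eventually.of_forall Tapp_compact)


lemma eigen (k : ℤ) : ∃ g : Lp ℝ 2 mu01, g ≠ 0 ∧
    (g : ℝ → ℝ) =ᵐ[mu01] (fun t => Real.cos (π * (4 * k + 1) * t / 2)) ∧
    T g = (2 / (π * (4 * k + 1))) • g := by
  set c : ℝ := π * (4 * (k:ℝ) + 1) / 2 with hcdef
  have h4k' : (4 * (k:ℝ) + 1) ≠ 0 := by
    have hz : ((4 * k + 1 : ℤ) : ℝ) ≠ 0 := by rw [Int.cast_ne_zero]; omega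
    exact_mod_cast hz
  have hcne : c ≠ 0 := by
    rw [hcdef]
    exact div_ne_zero (mul_ne_zero Real.pi_ne_zero h4k') two_ne_zero
  have harg : ∀ t : ℝ, π * (4 * (k:ℝ) + 1) * t / 2 = c * t := fun t => by
    rw [hcdef]; ring
  have hcont : Continuous (fun t : ℝ => Real.cos (π * (4 * (k:ℝ) + 1) * t / 2)) :=
    Real.continuous_cos.comp ((continuous_const.mul continuous_id).div_const 2)
  have hmem : MemLp (fun t : ℝ => Real.cos (π * (4 * (k:ℝ) + 1) * t / 2)) 2 mu01 :=
    MemLp.of_bound hcont.aestronglyMeasurable 1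
      (Eventually.of_forall fun t => by
        rw [Real.norm_eq_abs]; exact Real.abs_cos_le_one _)
  refine ⟨hmem.toLp _, ?_, hmem.coeFn_toLp, ?_⟩
  · intro h0
    have hae0 : (fun t : ℝ => Real.cos (π * (4 * (k:ℝ) + 1) * t / 2)) =ᵐ[mu01] 0 :=
      hmem.coeFn_toLp.symm.trans (Lp.eq_zero_iff_ae_eq_zero.mp h0)
    have h' : ∀ᵐ t ∂mu01, Real.cos (π * (4 * (k:ℝ) + 1) * t / 2) = 0 := by
      filter_upwards [hae0] with t ht; simpa using ht
    rw [ae_iff] at h'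
    set δ := min (1/2 : ℝ) (1/(|c|+1)) with hδ
    have hδ0 : 0 < δ := lt_min (by norm_num) (by positivity)
    have hδhalf : δ ≤ 1/2 := min_le_left _ _
    have hδc : δ ≤ 1/(|c|+1) := min_le_right _ _
    have hsub : Set.Ioo (0:ℝ) δ
        ⊆ {t | ¬ Real.cos (π * (4 * (k:ℝ) + 1) * t / 2) = 0} := by
      intro t ht
      obtain ⟨ht0, htδ⟩ := ht
      have habs : |c * t| < 1 := by
        rw [abs_mul, abs_of_pos ht0]
        have h1 : |c| * t ≤ |c| * (1/(|c|+1)) := by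
          refine mul_le_mul_of_nonneg_left (le_trans htδ.le hδc) (abs_nonneg c)
        have h2 : |c| * (1/(|c|+1)) < 1 := by
          rw [mul_one_div]
          exact div_lt_one (by positivity) |>.mpr (by linarith [abs_nonneg c])
        linarith
      have hpi : (1:ℝ) < π/2 := by linarith [Real.pi_gt_three]
      obtain ⟨hl, hr⟩ := abs_lt.mp habs
      have hcos : 0 < Real.cos (c * t) :=
        Real.cos_pos_of_mem_Ioo ⟨by linarith, by linarith⟩
      simp only [Set.mem_setOf_eq, harg t]
      exact ne_of_gt hcos
    have hnull : mu01 (Set.Ioo 0 δ) = 0 := measure_mono_null hsub h'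
    rw [mu01, Measure.restrict_apply measurableSet_Ioo,
      Set.inter_eq_left.mpr (Set.Ioo_subset_Ioo_right (by linarith)),
      Real.volume_Ioo] at hnull
    rw [ENNReal.ofReal_eq_zero] at hnull
    linarith
  · refine Lp.ext ?_
    have hrhs : (((2 / (π * (4 * (k:ℝ) + 1))) • hmem.toLp _ : Lp ℝ 2 mu01) : ℝ → ℝ)
        =ᵐ[mu01] fun t => (2 / (π * (4 * (k:ℝ) + 1))) * Real.cos (π * (4 * (k:ℝ) + 1) * t / 2) := by
      refine (Lp.coeFn_smul _ _).trans ?_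
      filter_upwards [hmem.coeFn_toLp] with t ht
      simp [ht]
    filter_upwards [T_spec (hmem.toLp _), hrhs, ae_mem01,
      hmem.coeFn_toLp] with t hT hR ht _
    obtain ⟨ht0, ht1⟩ := ht
    rw [hT, hR]
    have hsubset : Set.Ioc (0:ℝ) (1-t) ⊆ Set.Ioo 0 1 := fun x hx =>
      ⟨hx.1, by linarith [hx.2]⟩
    have hgcos : (hmem.toLp _ : ℝ → ℝ)
        =ᵐ[volume.restrict (Set.Ioc 0 (1-t))]
          (fun s => Real.cos (π * (4 * (k:ℝ) + 1) * s / 2)) :=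
      ae_restrict_of_ae_restrict_of_subset hsubset hmem.coeFn_toLp
    have h1 : (∫ s in (0:ℝ)..(1-t), (hmem.toLp _ : ℝ → ℝ) s)
        = ∫ s in (0:ℝ)..(1-t), Real.cos (c * s) := by
      rw [intervalIntegral.integral_of_le (by linarith), intervalIntegral.integral_of_le (by linarith)]
      refine integral_congr_ae ?_
      filter_upwards [hgcos] with s hs
      rw [hs, harg s]
    have h2 : (∫ s in (0:ℝ)..(1-t), Real.cos (c * s)) = Real.sin (c*(1-t))/c := by
      rw [intervalIntegral.integral_comp_mul_left (fun x => Real.cos x) hcne]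
      simp [integral_cos]
      ring
    have hc2 : c = π/2 + (k:ℝ) * (2*π) := by rw [hcdef]; ring
    have hsinc : Real.sin c = 1 := by
      rw [hc2, Real.sin_add_int_mul_two_pi, Real.sin_pi_div_two]
    have hcosc : Real.cos c = 0 := by
      rw [hc2, Real.cos_add_int_mul_two_pi, Real.cos_pi_div_two]
    rw [h1, h2]
    have hsc : Real.sin (c*(1-t)) = Real.cos (c*t) := by
      have he : c*(1-t) = c - c*t := by ring
      rw [he, Real.sin_sub, hsinc, hcosc]; ring
    rw [hsc, harg t, hcdef]
    field_simp


end OpT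
end OpTSection

/-- There is a (bounded linear) operator `T` on `L²(0,1)` with
`(Tg)(t) = ∫_0^{1-t} g(s) ds`; it is compact and self-adjoint, and for every
`k ∈ ℤ` the function `t ↦ cos(π(4k+1)t/2)` is an eigenfunction of `T` with
eigenvalue `2/(π(4k+1))`. -/
theorem operator_T_compact_selfAdjoint_eigen :
    ∃ T : Lp ℝ 2 mu01 →L[ℝ] Lp ℝ 2 mu01,
      (∀ g : Lp ℝ 2 mu01,
        (T g : ℝ → ℝ) =ᵐ[mu01] fun t => ∫ s in (0:ℝ)..(1 - t), g s) ∧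
      IsCompactOperator T ∧
      IsSelfAdjoint T ∧
      ∀ k : ℤ, ∃ g : Lp ℝ 2 mu01, g ≠ 0 ∧
        (g : ℝ → ℝ) =ᵐ[mu01] (fun t => Real.cos (π * (4 * k + 1) * t / 2)) ∧
        T g = (2 / (π * (4 * k + 1))) • g := by
  exact ⟨OpT.T, OpT.T_spec, OpT.T_compact, OpT.T_selfAdjoint, OpT.eigen⟩
end

section
/- For every n ≥ 3, vol(C_n) = ∫_0^1 𝒦_n(t,t) dt, where 𝒦_n is the n-fold iterated kernel defined by 𝒦_1(s,t) = 1 if s+t ≤ 1 and 0 otherwise, and 𝒦_n(t,s) = ∫_0^1 𝒦_1(t,x)·𝒦_{n−1}(x,s) dx for n ≥ 2. -/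
open MeasureTheory

/-- The cycle `C_n` on vertex set `{1,…,n}` with edges `i(i+1)` (cyclically, mod n). -/
def cycG (n : ℕ) : SimpleGraph (Fin n) :=
  SimpleGraph.fromRel (fun i j => ((i : ℕ) + 1) % n = (j : ℕ))

/-- The kernel `𝒦₁(s,t) = 1` if `s + t ≤ 1` and `0` otherwise. -/
noncomputable def K1 (t s : ℝ) : ℝ := if t + s ≤ 1 then 1 else 0

/-- The iterated kernels: `𝒦_n(t,s) = ∫_0^1 𝒦₁(t,x)·𝒦_{n-1}(x,s) dx` for `n ≥ 2`. -/
noncomputable def iterK : ℕ → ℝ → ℝ → ℝ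
  | 0 => fun _ _ => 0
  | 1 => K1
  | n + 2 => fun t s => ∫ x in (0:ℝ)..1, K1 t x * iterK (n + 1) x s

/-! ### Auxiliary definitions and lemmas -/

/-- The "chain" function: `chainF m t s x = K1(t,x₀)·K1(x₀,x₁)⋯K1(x_{m-1},s)`. -/
noncomputable def chainF : (m : ℕ) → ℝ → ℝ → (Fin m → ℝ) → ℝ
  | 0 => fun t s _ => K1 t s
  | m + 1 => fun t s x => K1 t (x 0) * chainF m (x 0) s (fun j => x j.succ)

/-- The unit box in `Fin m → ℝ`. -/
def unitBox (m : ℕ) : Set (Fin m → ℝ) := Set.pi Set.univ fun _ => Set.Icc (0:ℝ) 1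

lemma K1_nonneg (t s : ℝ) : 0 ≤ K1 t s := by unfold K1; split <;> norm_num

lemma K1_le_one (t s : ℝ) : K1 t s ≤ 1 := by unfold K1; split <;> norm_num

lemma measurable_K1 : Measurable fun p : ℝ × ℝ => K1 p.1 p.2 := by
  unfold K1
  exact Measurable.ite (measurableSet_le (by fun_prop) measurable_const)
    measurable_const measurable_const

lemma measurable_chainF (m : ℕ) :
    Measurable fun p : (ℝ × ℝ) × (Fin m → ℝ) => chainF m p.1.1 p.1.2 p.2 := by
  induction m with
  | zero => exact measurable_K1.comp measurable_fst
  | succ m ih =>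
    simp only [chainF]
    apply Measurable.mul
    · have h1 : Measurable fun p : (ℝ × ℝ) × (Fin (m+1) → ℝ) => (p.1.1, p.2 0) := by fun_prop
      exact measurable_K1.comp h1
    · have h2 : Measurable fun p : (ℝ × ℝ) × (Fin (m+1) → ℝ) =>
          ((p.2 0, p.1.2), fun j : Fin m => p.2 j.succ) := by fun_prop
      exact ih.comp h2

lemma chainF_nonneg (m : ℕ) (t s : ℝ) (x : Fin m → ℝ) : 0 ≤ chainF m t s x := by
  induction m generalizing t with
  | zero => exact K1_nonneg _ _
  | succ m ih => exact mul_nonneg (K1_nonneg _ _) (ih _ _)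

lemma chainF_le_one (m : ℕ) (t s : ℝ) (x : Fin m → ℝ) : chainF m t s x ≤ 1 := by
  induction m generalizing t with
  | zero => exact K1_le_one _ _
  | succ m ih =>
    have h1 := K1_le_one t (x 0)
    have h2 := ih (x 0) (fun j => x j.succ)
    have h3 := chainF_nonneg m (x 0) s (fun j => x j.succ)
    have h4 := K1_nonneg t (x 0)
    show K1 t (x 0) * chainF m (x 0) s (fun j => x j.succ) ≤ 1
    nlinarith

lemma volume_unitBox (m : ℕ) : volume (unitBox m) = 1 := by
  rw [unitBox, volume_pi_pi]
  simp

/-- Peel off the first coordinate of an integral over the unit box. -/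
lemma peel (m : ℕ) (g : ℝ → (Fin m → ℝ) → ℝ)
    (hg : Measurable fun p : ℝ × (Fin m → ℝ) => g p.1 p.2)
    (hb : ∀ a y, ‖g a y‖ ≤ 1) :
    ∫ x in unitBox (m+1), g (x 0) (fun j => x j.succ) =
      ∫ a in Set.Icc (0:ℝ) 1, ∫ y in unitBox m, g a y := by
  set e : (Fin (m+1) → ℝ) ≃ᵐ ℝ × (Fin m → ℝ) :=
    MeasurableEquiv.piFinSuccAbove (fun _ : Fin (m+1) => ℝ) 0 with he
  have hmp : MeasurePreserving e volume volume :=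
    volume_preserving_piFinSuccAbove (fun _ : Fin (m+1) => ℝ) 0
  have hpre : e ⁻¹' ((Set.Icc (0:ℝ) 1) ×ˢ unitBox m) = unitBox (m+1) := by
    ext x
    simp only [he, Set.mem_preimage, MeasurableEquiv.piFinSuccAbove_apply, Set.mem_prod,
      unitBox, Set.mem_pi, Set.mem_univ, forall_true_left, Fin.zero_succAbove,
      Fin.forall_fin_succ, true_implies]
    tauto
  have hint : IntegrableOn (fun p : ℝ × (Fin m → ℝ) => g p.1 p.2)
      ((Set.Icc (0:ℝ) 1) ×ˢ unitBox m) (volume.prod volume) := by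
    apply Measure.integrableOn_of_bounded (M := 1)
    · rw [Measure.prod_prod, Real.volume_Icc, volume_unitBox]
      simp
    · exact hg.aestronglyMeasurable
    · filter_upwards with p using hb _ _
  have hBmeas : MeasurableSet (unitBox (m+1)) :=
    MeasurableSet.univ_pi fun _ => measurableSet_Icc
  have h1 : ∫ x in unitBox (m+1), g (x 0) (fun j => x j.succ) =
      ∫ x in e ⁻¹' ((Set.Icc (0:ℝ) 1) ×ˢ unitBox m), g (e x).1 (e x).2 := by
    rw [hpre]
    refine setIntegral_congr_fun hBmeas fun x _ => ?_
    rfl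
  rw [h1]
  have h2 := hmp.setIntegral_preimage_emb e.measurableEmbedding (fun p => g p.1 p.2)
    ((Set.Icc (0:ℝ) 1) ×ˢ unitBox m)
  have h3 := setIntegral_prod (fun p : ℝ × (Fin m → ℝ) => g p.1 p.2) hint
  rw [← Measure.volume_eq_prod] at h3
  exact h2.trans h3

lemma setIntegral_chainF (m : ℕ) (t s : ℝ) :
    ∫ x in unitBox m, chainF m t s x = iterK (m+1) t s := by
  induction m generalizing t with
  | zero =>
    simp only [chainF]
    rw [setIntegral_const, measureReal_def, volume_unitBox]
    simp [iterK]
  | succ m ih =>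
    have hmeas : Measurable fun p : ℝ × (Fin m → ℝ) => K1 t p.1 * chainF m p.1 s p.2 := by
      apply Measurable.mul
      · exact measurable_K1.comp (measurable_const.prodMk measurable_fst)
      · exact (measurable_chainF m).comp
          ((measurable_fst.prodMk measurable_const).prodMk measurable_snd)
    have hbd : ∀ a y, ‖K1 t a * chainF m a s y‖ ≤ 1 := by
      intro a y
      rw [Real.norm_eq_abs, abs_of_nonneg (mul_nonneg (K1_nonneg _ _) (chainF_nonneg _ _ _ _))]
      nlinarith [K1_le_one t a, K1_nonneg t a, chainF_le_one m a s y, chainF_nonneg m a s y]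
    calc ∫ x in unitBox (m+1), chainF (m+1) t s x
        = ∫ x in unitBox (m+1), K1 t (x 0) * chainF m (x 0) s (fun j => x j.succ) := rfl
      _ = ∫ a in Set.Icc (0:ℝ) 1, ∫ y in unitBox m, K1 t a * chainF m a s y :=
          peel m (fun a y => K1 t a * chainF m a s y) hmeas hbd
      _ = ∫ a in Set.Icc (0:ℝ) 1, K1 t a * iterK (m+1) a s := by
          refine setIntegral_congr_fun measurableSet_Icc fun a _ => ?_
          rw [integral_const_mul, ih a]
      _ = ∫ a in (0:ℝ)..1, K1 t a * iterK (m+1) a s := by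
          rw [intervalIntegral.integral_of_le zero_le_one, ← integral_Icc_eq_integral_Ioc]
      _ = iterK (m+2) t s := rfl

lemma chainF_shift (m : ℕ) (s : ℝ) (y : ℕ → ℝ) :
    chainF m (y 0) s (fun j : Fin m => y (j.1 + 1)) =
      if (∀ i < m, y i + y (i+1) ≤ 1) ∧ y m + s ≤ 1 then 1 else 0 := by
  induction m generalizing y with
  | zero => simp [chainF, K1]
  | succ m ih =>
    have hx : (fun j : Fin m => y ((j.succ : Fin (m+1)).1 + 1)) =
        (fun j : Fin m => (fun i => y (i + 1)) (j.1 + 1)) := by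
      funext j
      simp only [Fin.val_succ]
    show K1 (y 0) (y 1) * chainF m (y 1) s (fun j => y ((j.succ : Fin (m+1)).1 + 1)) = _
    rw [hx]
    have := ih (fun i => y (i + 1))
    rw [this]
    unfold K1
    rw [ite_mul, one_mul, zero_mul, ← ite_and]
    have hcond : (y 0 + y 1 ≤ 1 ∧ (∀ i < m, y (i+1) + y (i+1+1) ≤ 1) ∧ y (m+1) + s ≤ 1) ↔
        ((∀ i < m + 1, y i + y (i+1) ≤ 1) ∧ y (m+1) + s ≤ 1) := by
      constructor
      · rintro ⟨h1, h2, h3⟩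
        refine ⟨fun i hi => ?_, h3⟩
        match i with
        | 0 => exact h1
        | i + 1 => exact h2 i (by omega)
      · rintro ⟨h1, h2⟩
        exact ⟨h1 0 (by omega), fun i hi => h1 (i+1) (by omega), h2⟩
    rw [if_congr hcond rfl rfl]

/-- For `n ≥ 3`, `vol(C_n) = ∫_0^1 𝒦_n(t,t) dt`. -/
theorem vol_cycle_trace (n : ℕ) (hn : 3 ≤ n) :
    gvol (cycG n) = ∫ t in (0:ℝ)..1, iterK n t t := by
  obtain ⟨m, rfl⟩ : ∃ m, n = m + 1 := ⟨n - 1, by omega⟩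
  have hm : 2 ≤ m := by omega
  -- the value of `(i+1 : Fin (m+1))` as a natural number
  have hval : ∀ i : Fin (m+1), ((i + 1 : Fin (m+1)) : ℕ) = (i.1 + 1) % (m+1) := by
    intro i
    rw [Fin.add_def]
    have h1 : ((1 : Fin (m+1)) : ℕ) = 1 := by
      rw [Fin.val_one']
      exact Nat.mod_eq_of_lt (by omega)
    rw [h1]
  -- the cyclic constraint set
  set C : Set (Fin (m+1) → ℝ) := {x | ∀ i : Fin (m+1), x i + x (i+1) ≤ 1} with hC
  have hCmeas : MeasurableSet C := by
    have : C = ⋂ i : Fin (m+1), {x : Fin (m+1) → ℝ | x i + x (i+1) ≤ 1} := by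
      ext x; simp [hC]
    rw [this]
    exact MeasurableSet.iInter fun i =>
      measurableSet_le ((measurable_pi_apply i).add (measurable_pi_apply (i+1))) measurable_const
  have hBmeas : MeasurableSet (unitBox (m+1)) :=
    MeasurableSet.univ_pi fun _ => measurableSet_Icc
  -- the defining set of `gvol (cycG (m+1))` is `unitBox (m+1) ∩ C`
  have hsetEq : {x : Fin (m+1) → ℝ | (∀ i, x i ∈ Set.Icc (0:ℝ) 1) ∧
      ∀ ⦃i j⦄, (cycG (m+1)).Adj i j → x i + x j ≤ 1} = unitBox (m+1) ∩ C := by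
    ext x
    simp only [Set.mem_setOf_eq, Set.mem_inter_iff, unitBox, Set.mem_univ_pi, hC]
    constructor
    · rintro ⟨hbox, hadj⟩
      refine ⟨hbox, fun i => ?_⟩
      apply hadj
      rw [cycG, SimpleGraph.fromRel_adj]
      refine ⟨fun h => ?_, Or.inl ?_⟩
      · -- i ≠ i + 1
        have h2 := congrArg Fin.val h
        rw [hval i] at h2
        have h3 := i.isLt
        rcases Nat.lt_or_ge (i.1 + 1) (m + 1) with h4 | h4
        · rw [Nat.mod_eq_of_lt h4] at h2; omega
        · have hi : i.1 = m := by omega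
          rw [hi, Nat.mod_self] at h2
          omega
      · rw [hval i]
    · rintro ⟨hbox, hcyc⟩
      refine ⟨hbox, fun i j hadj => ?_⟩
      rw [cycG, SimpleGraph.fromRel_adj] at hadj
      obtain ⟨-, h | h⟩ := hadj
      · have hj : j = i + 1 := by
          apply Fin.ext
          rw [hval i]
          exact h.symm
        rw [hj]; exact hcyc i
      · have hi : i = j + 1 := by
          apply Fin.ext
          rw [hval j]
          exact h.symm
        rw [hi, add_comm]; exact hcyc j
  -- pointwise identity between the indicator of `C` and the chain function
  have hchain : ∀ x : Fin (m+1) → ℝ,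
      chainF m (x 0) (x 0) (fun j => x j.succ) = if x ∈ C then 1 else 0 := by
    intro x
    set y : ℕ → ℝ := fun i => x ⟨i % (m+1), Nat.mod_lt _ (Nat.succ_pos m)⟩ with hy
    have hyval : ∀ i : Fin (m+1), y i.1 = x i := by
      intro i
      simp only [hy]
      congr 1
      exact Fin.ext (Nat.mod_eq_of_lt i.isLt)
    have h0 : y 0 = x 0 := hyval 0
    have htail : (fun j : Fin m => x j.succ) = fun j : Fin m => y (j.1 + 1) := by
      funext j
      simp only [hy]
      congr 1
      exact Fin.ext (by simp [Fin.val_succ, Nat.mod_eq_of_lt (show j.1 + 1 < m + 1 by omega)])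
    rw [← h0, htail, chainF_shift]
    refine if_congr ?_ rfl rfl
    have hkey : ∀ i : Fin (m+1), (x i + x (i+1) ≤ 1) ↔ y i.1 + y (i.1 + 1) ≤ 1 := by
      intro i
      rw [hyval i]
      have : y (i.1 + 1) = x (i + 1) := by
        simp only [hy]
        congr 1
        exact Fin.ext (by rw [hval i])
      rw [this]
    constructor
    · rintro ⟨h1, h2⟩ i
      rw [hkey i]
      rcases Nat.lt_or_ge i.1 m with h | h
      · exact h1 i.1 h
      · have hi : i.1 = m := by have := i.isLt; omega
        rw [hi]
        have : y (m + 1) = x 0 := by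
          simp only [hy]
          congr 1
          exact Fin.ext (by simp [Nat.mod_self])
        rw [this]
        rw [h0] at h2
        exact h2
    · intro h
      constructor
      · intro i hi
        have := (hkey ⟨i, by omega⟩).mp (h ⟨i, by omega⟩)
        simpa using this
      · have := (hkey ⟨m, by omega⟩).mp (h ⟨m, by omega⟩)
        simp only at this
        have hym1 : y (m + 1) = x 0 := by
          simp only [hy]
          congr 1
          exact Fin.ext (by simp [Nat.mod_self])
        rw [hym1] at this
        rw [← h0] at this
        exact this
  -- put it together
  rw [gvol, hsetEq]
  have hmeasC : Measurable fun p : ℝ × (Fin m → ℝ) => chainF m p.1 p.1 p.2 :=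
    (measurable_chainF m).comp ((measurable_fst.prodMk measurable_fst).prodMk measurable_snd)
  have hbdC : ∀ a y, ‖chainF m a a y‖ ≤ 1 := by
    intro a y
    rw [Real.norm_eq_abs, abs_of_nonneg (chainF_nonneg _ _ _ _)]
    exact chainF_le_one _ _ _ _
  calc (volume (unitBox (m+1) ∩ C)).toReal
      = ∫ x, (unitBox (m+1) ∩ C).indicator 1 x := (integral_indicator_one (hBmeas.inter hCmeas)).symm
    _ = ∫ x in unitBox (m+1), C.indicator 1 x := by
        rw [← Set.indicator_indicator, integral_indicator hBmeas]
    _ = ∫ x in unitBox (m+1), chainF m (x 0) (x 0) (fun j => x j.succ) := by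
        refine setIntegral_congr_fun hBmeas fun x _ => ?_
        rw [hchain x, Set.indicator_apply]
        split <;> simp
    _ = ∫ a in Set.Icc (0:ℝ) 1, ∫ y in unitBox m, chainF m a a y :=
        peel m (fun a y => chainF m a a y) hmeasC hbdC
    _ = ∫ a in Set.Icc (0:ℝ) 1, iterK (m+1) a a := by
        refine setIntegral_congr_fun measurableSet_Icc fun a _ => ?_
        rw [setIntegral_chainF]
    _ = ∫ t in (0:ℝ)..1, iterK (m+1) t t := by
        rw [intervalIntegral.integral_of_le zero_le_one, ← integral_Icc_eq_integral_Ioc]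
end
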